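/- Suppose there exists a t-(v,k,1)-design with k/2 + 1 < t ≤ k, and let t1, t2 be positive integers with max{t1, t2} < t and t1 + t2 = k. Then there exists a (K,F,Q,S) placement delivery array with K = C(v,t1), F = b, Q = b − λ_{t1}, and S = C(v,t2), where λ_{t1} = C(v−t1, t−t1)/C(k−t1, t−t1) and b = C(v,t)/C(k,t). -/
import Mathlib


open Finset


lemma card_filter_superset_powersetCard {α : Type*} [DecidableEq α] (T A : Finset α)
    (hTA : T ⊆ A) {n : ℕ} (hn : T.card ≤ n) :
    ((A.powersetCard n).filter fun X => T ⊆ X).card =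
      (A.card - T.card).choose (n - T.card) := by
  rw [← card_sdiff_of_subset hTA, ← Finset.card_powersetCard (n - T.card) (A \ T)]
  apply Finset.card_bij' (fun X _ => X \ T) (fun U _ => U ∪ T)
  · intro X hX
    simp only [mem_filter, mem_powersetCard] at hX
    rw [mem_powersetCard]
    exact ⟨sdiff_subset_sdiff hX.1.1 Subset.rfl, by rw [card_sdiff_of_subset hX.2, hX.1.2]⟩
  · intro U hU
    rw [mem_powersetCard] at hU
    have hdisj : Disjoint U T := disjoint_of_subset_left hU.1 (sdiff_disjoint)
    simp only [mem_filter, mem_powersetCard]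
    refine ⟨⟨union_subset (hU.1.trans (sdiff_subset)) hTA, ?_⟩, subset_union_right⟩
    rw [card_union_of_disjoint hdisj, hU.2, Nat.sub_add_cancel hn]
  · intro X hX
    simp only [mem_filter, mem_powersetCard] at hX
    exact sdiff_union_of_subset hX.2
  · intro U hU
    rw [mem_powersetCard] at hU
    have hdisj : Disjoint U T := disjoint_of_subset_left hU.1 (sdiff_disjoint)
    rw [union_sdiff_right, sdiff_eq_self_of_disjoint hdisj]

lemma pda_double_count {V : Type} [Fintype V] [DecidableEq V] (B : Finset (Finset V))
    (t v k : ℕ)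
    (hcardV : Fintype.card V = v) (hblk : ∀ blk ∈ B, blk.card = k)
    (hdes : ∀ T : Finset V, T.card = t → (B.filter fun blk => T ⊆ blk).card = 1)
    (T1 : Finset V) (hT1 : T1.card ≤ t) :
    (B.filter fun blk => T1 ⊆ blk).card * (k - T1.card).choose (t - T1.card) =
      (v - T1.card).choose (t - T1.card) := by
  classical
  set 𝒯 := ((univ : Finset V).powersetCard t).filter fun X => T1 ⊆ X with h𝒯
  have key : ∑ T ∈ 𝒯, (B.filter fun blk => T ⊆ blk).card = 𝒯.card := by
    rw [Finset.sum_congr rfl fun T hT => ?_, Finset.sum_const, smul_eq_mul, mul_one]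
    simp only [h𝒯, mem_filter, mem_powersetCard] at hT
    exact hdes T hT.1.2
  have hcardT : 𝒯.card = (v - T1.card).choose (t - T1.card) := by
    rw [h𝒯, card_filter_superset_powersetCard T1 univ (subset_univ _) hT1, card_univ, hcardV]
  rw [← hcardT, ← key]
  -- now compute the sum the other way
  have swap : ∑ T ∈ 𝒯, (B.filter fun blk => T ⊆ blk).card
      = ∑ blk ∈ B, (𝒯.filter fun T => T ⊆ blk).card := by
    simp only [card_filter]
    exact Finset.sum_comm
  rw [swap]
  have inner : ∀ blk ∈ B, (𝒯.filter fun T => T ⊆ blk).card =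
      if T1 ⊆ blk then (k - T1.card).choose (t - T1.card) else 0 := by
    intro blk hb
    by_cases h : T1 ⊆ blk
    · rw [if_pos h, ← hblk blk hb, ← card_filter_superset_powersetCard T1 blk h hT1]
      congr 1
      ext T
      simp only [h𝒯, mem_filter, mem_powersetCard]
      constructor
      · rintro ⟨⟨⟨-, hc⟩, h1⟩, h2⟩; exact ⟨⟨h2, hc⟩, h1⟩
      · rintro ⟨⟨h2, hc⟩, h1⟩; exact ⟨⟨⟨subset_univ _, hc⟩, h1⟩, h2⟩
    · rw [if_neg h, card_eq_zero, filter_eq_empty_iff]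
      intro T hT hTb
      simp only [h𝒯, mem_filter, mem_powersetCard] at hT
      exact h (hT.2.trans hTb)
  rw [Finset.sum_congr rfl inner, ← Finset.sum_filter, Finset.sum_const, smul_eq_mul]

/-- A `(K, F, Q, S)` placement delivery array: an `F × K` array with entries in
`[S] ∪ {*}` (where `none` plays the role of `*`) satisfying conditions C1, C2, C3. -/
def IsPDA {K F S : ℕ} (Q : ℕ) (P : Fin F → Fin K → Option (Fin S)) : Prop :=
  -- C1: the symbol `*` appears exactly `Q` times in each column
  (∀ k : Fin K, (univ.filter fun j : Fin F => P j k = none).card = Q) ∧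
  -- C2: each integer `s ∈ [S]` occurs at least once in the array
  (∀ s : Fin S, ∃ j k, P j k = some s) ∧
  -- C3
  (∀ (j₁ j₂ : Fin F) (k₁ k₂ : Fin K) (s : Fin S), (j₁, k₁) ≠ (j₂, k₂) →
    P j₁ k₁ = some s → P j₂ k₂ = some s →
    j₁ ≠ j₂ ∧ k₁ ≠ k₂ ∧ P j₁ k₂ = none ∧ P j₂ k₁ = none)

/-- There exists a `(K, F, Q, S)` placement delivery array. -/
def ExistsPDA (K F Q S : ℕ) : Prop :=
  ∃ P : Fin F → Fin K → Option (Fin S), IsPDA Q P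

/-- A `t`-`(v,k,1)` design (Steiner system `S(t,k,v)`): `V` is a `v`-set, each block
is a `k`-subset of `V`, and every `t`-subset of `V` lies in exactly one block. -/
def IsSteinerSystem {V : Type} [Fintype V] [DecidableEq V] (B : Finset (Finset V))
    (t v k : ℕ) : Prop :=
  Fintype.card V = v ∧ (∀ blk ∈ B, blk.card = k) ∧
  (∀ T : Finset V, T.card = t → (B.filter fun blk => T ⊆ blk).card = 1)

/-- Steiner-system construction (`k/2 + 1 < t ≤ k`), parameter set 2: a `t`-`(v,k,1)`
design with `k/2 + 1 < t ≤ k`, and positive `t1, t2` with `max{t1,t2} < t` and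
`t1 + t2 = k`, yields a PDA with `K = C(v,t1)`, `F = b`, `Q = b - λ_{t1}`,
`S = C(v,t2)`, where `λ_{t1} = C(v-t1,t-t1)/C(k-t1,t-t1)` and
`b = C(v,t)/C(k,t)`. -/
theorem exists_pda_of_steiner_large_t_two {V : Type} [Fintype V] [DecidableEq V]
    (B : Finset (Finset V)) (t v k t1 t2 : ℕ) (ht : 0 < t) (htk : t ≤ k) (hkv : k < v)
    (hdes : IsSteinerSystem B t v k)
    (ht2 : k + 2 < 2 * t) (ht1pos : 0 < t1) (ht2pos : 0 < t2)
    (hmax : max t1 t2 < t) (hsum : t1 + t2 = k) :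
    ExistsPDA (Nat.choose v t1) (Nat.choose v t / Nat.choose k t)
      (Nat.choose v t / Nat.choose k t -
        Nat.choose (v - t1) (t - t1) / Nat.choose (k - t1) (t - t1))
      (Nat.choose v t2) := by
  classical
  obtain ⟨hcardV, hblkcard, hdes⟩ := hdes
  have ht1t : t1 < t := lt_of_le_of_lt (le_max_left t1 t2) hmax
  have ht2t : t2 < t := lt_of_le_of_lt (le_max_right t1 t2) hmax
  have hkt : 0 < Nat.choose k t := Nat.choose_pos htk
  have hb : B.card * Nat.choose k t = Nat.choose v t := by
    have h := pda_double_count B t v k hcardV hblkcard hdes ∅ (by simp)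
    simpa using h
  have hBcard : B.card = Nat.choose v t / Nat.choose k t := by
    rw [← hb, Nat.mul_div_cancel _ hkt]
  have hlam : ∀ T1 : Finset V, T1.card = t1 →
      (B.filter fun blk => T1 ⊆ blk).card =
        Nat.choose (v - t1) (t - t1) / Nat.choose (k - t1) (t - t1) := by
    intro T1 hT1c
    have h2 := pda_double_count B t v k hcardV hblkcard hdes T1 (by omega)
    rw [hT1c] at h2
    have hpos : 0 < Nat.choose (k - t1) (t - t1) :=
      Nat.choose_pos (Nat.sub_le_sub_right htk t1)
    rw [← h2, Nat.mul_div_cancel _ hpos]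
  have hK : ((univ : Finset V).powersetCard t1).card = Nat.choose v t1 := by
    rw [card_powersetCard, card_univ, hcardV]
  have hS : ((univ : Finset V).powersetCard t2).card = Nat.choose v t2 := by
    rw [card_powersetCard, card_univ, hcardV]
  let eB : Fin (Nat.choose v t / Nat.choose k t) ≃ {x // x ∈ B} :=
    (finCongr hBcard.symm).trans B.equivFin.symm
  let eK : Fin (Nat.choose v t1) ≃ {x // x ∈ (univ : Finset V).powersetCard t1} :=
    (finCongr hK.symm).trans ((univ : Finset V).powersetCard t1).equivFin.symm
  let eS : Fin (Nat.choose v t2) ≃ {x // x ∈ (univ : Finset V).powersetCard t2} :=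
    (finCongr hS.symm).trans ((univ : Finset V).powersetCard t2).equivFin.symm
  have hbk : ∀ j, ((eB j : Finset V)).card = k := fun j => hblkcard _ (eB j).2
  have hck : ∀ c, ((eK c : Finset V)).card = t1 :=
    fun c => (mem_powersetCard.mp (eK c).2).2
  have hmem : ∀ (j : Fin (Nat.choose v t / Nat.choose k t)) (c : Fin (Nat.choose v t1)),
      (eK c : Finset V) ⊆ (eB j : Finset V) →
      ((eB j : Finset V) \ (eK c : Finset V)) ∈ (univ : Finset V).powersetCard t2 := by
    intro j c h
    rw [mem_powersetCard]
    refine ⟨subset_univ _, ?_⟩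
    rw [card_sdiff_of_subset h, hbk, hck]
    omega
  refine ⟨fun j c => if h : (eK c : Finset V) ⊆ (eB j : Finset V) then
      some (eS.symm ⟨(eB j : Finset V) \ (eK c : Finset V), hmem j c h⟩) else none,
    ?_, ?_, ?_⟩
  · -- C1
    intro c
    have hfe : (univ.filter fun j : Fin (Nat.choose v t / Nat.choose k t) =>
        (if h : (eK c : Finset V) ⊆ (eB j : Finset V) then
          some (eS.symm ⟨(eB j : Finset V) \ (eK c : Finset V), hmem j c h⟩) else none)
          = none) =
        univ.filter fun j => ¬ (eK c : Finset V) ⊆ (eB j : Finset V) := by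
      apply filter_congr
      intro j _
      by_cases h : (eK c : Finset V) ⊆ (eB j : Finset V)
      · simp [h]
      · simp [h]
    rw [hfe]
    have hcount : (univ.filter fun j : Fin (Nat.choose v t / Nat.choose k t) =>
        ¬ (eK c : Finset V) ⊆ (eB j : Finset V)).card =
        (B.filter fun blk => ¬ (eK c : Finset V) ⊆ blk).card := by
      apply Finset.card_bij (fun j _ => (eB j : Finset V))
      · intro j hj
        simp only [mem_filter, mem_univ, true_and] at hj ⊢
        exact ⟨(eB j).2, hj⟩
      · intro j₁ h₁ j₂ h₂ h
        exact eB.injective (Subtype.ext h)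
      · intro blk hblk
        simp only [mem_filter, mem_univ, true_and] at hblk
        refine ⟨eB.symm ⟨blk, hblk.1⟩, by simp [hblk.2], by simp⟩
    rw [hcount]
    have hsplit := card_filter_add_card_filter_not
      (s := B) (p := fun blk => (eK c : Finset V) ⊆ blk)
    have hl := hlam _ (hck c)
    omega
  · -- C2
    intro s
    have hS2c : ((eS s : Finset V)).card = t2 := (mem_powersetCard.mp (eS s).2).2
    obtain ⟨T, hST, -, hTcard⟩ := exists_subsuperset_card_eq (n := t)
      (subset_univ (eS s : Finset V)) (by omega) (by rw [card_univ, hcardV]; omega)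
    have hpos : 0 < (B.filter fun blk => T ⊆ blk).card := by
      rw [hdes T hTcard]; norm_num
    obtain ⟨blk, hblk⟩ := card_pos.mp hpos
    rw [mem_filter] at hblk
    have hS2b : (eS s : Finset V) ⊆ blk := hST.trans hblk.2
    have hbkc : blk.card = k := hblkcard _ hblk.1
    have hT1mem : blk \ (eS s : Finset V) ∈ (univ : Finset V).powersetCard t1 := by
      rw [mem_powersetCard]
      refine ⟨subset_univ _, ?_⟩
      rw [card_sdiff_of_subset hS2b, hbkc, hS2c]
      omega
    refine ⟨eB.symm ⟨blk, hblk.1⟩, eK.symm ⟨blk \ (eS s : Finset V), hT1mem⟩, ?_⟩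
    simp only [Equiv.apply_symm_apply]
    rw [dif_pos sdiff_subset]
    have hdiff : blk \ (blk \ (eS s : Finset V)) = (eS s : Finset V) := by
      rw [sdiff_sdiff_self_left, inter_eq_right.mpr hS2b]
    refine congrArg some ?_
    rw [Equiv.symm_apply_eq]
    exact Subtype.ext hdiff
  · -- C3
    intro j₁ j₂ c₁ c₂ s hne h1 h2
    beta_reduce at h1 h2 ⊢
    by_cases hc1 : (eK c₁ : Finset V) ⊆ (eB j₁ : Finset V)
    swap
    · rw [dif_neg hc1] at h1; exact absurd h1 (by simp)
    by_cases hc2 : (eK c₂ : Finset V) ⊆ (eB j₂ : Finset V)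
    swap
    · rw [dif_neg hc2] at h2; exact absurd h2 (by simp)
    rw [dif_pos hc1] at h1
    rw [dif_pos hc2] at h2
    have e1 : (eB j₁ : Finset V) \ (eK c₁ : Finset V) = (eS s : Finset V) :=
      congrArg Subtype.val ((Equiv.symm_apply_eq eS).mp (Option.some.inj h1))
    have e2 : (eB j₂ : Finset V) \ (eK c₂ : Finset V) = (eS s : Finset V) :=
      congrArg Subtype.val ((Equiv.symm_apply_eq eS).mp (Option.some.inj h2))
    have hT1eq : (eB j₁ : Finset V) \ (eS s : Finset V) = (eK c₁ : Finset V) := by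
      rw [← e1, sdiff_sdiff_self_left, inter_eq_right.mpr hc1]
    have hT2eq : (eB j₂ : Finset V) \ (eS s : Finset V) = (eK c₂ : Finset V) := by
      rw [← e2, sdiff_sdiff_self_left, inter_eq_right.mpr hc2]
    have hb1eq : (eB j₁ : Finset V) = (eK c₁ : Finset V) ∪ (eS s : Finset V) := by
      rw [← e1, union_sdiff_of_subset hc1]
    have hb2eq : (eB j₂ : Finset V) = (eK c₂ : Finset V) ∪ (eS s : Finset V) := by
      rw [← e2, union_sdiff_of_subset hc2]
    have hbne : (eB j₁ : Finset V) ≠ (eB j₂ : Finset V) := by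
      intro h
      apply hne
      have hT : (eK c₁ : Finset V) = (eK c₂ : Finset V) := by
        rw [← hT1eq, h, hT2eq]
      have hjj : j₁ = j₂ := eB.injective (Subtype.ext h)
      have hcc : c₁ = c₂ := eK.injective (Subtype.ext hT)
      rw [hjj, hcc]
    have hj : j₁ ≠ j₂ := fun h => hbne (by rw [h])
    have hsub21 : ¬ (eK c₂ : Finset V) ⊆ (eB j₁ : Finset V) := by
      intro h
      apply hbne
      refine (Finset.eq_of_subset_of_card_le ?_ ?_).symm
      · rw [hb2eq]
        exact union_subset h (by rw [← e1]; exact sdiff_subset)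
      · rw [hbk, hbk]
    have hsub12 : ¬ (eK c₁ : Finset V) ⊆ (eB j₂ : Finset V) := by
      intro h
      apply hbne
      refine Finset.eq_of_subset_of_card_le ?_ ?_
      · rw [hb1eq]
        exact union_subset h (by rw [← e2]; exact sdiff_subset)
      · rw [hbk, hbk]
    have hcne : c₁ ≠ c₂ := by
      intro h
      exact hsub21 (by rw [← h]; exact hc1)
    exact ⟨hj, hcne, by rw [dif_neg hsub21], by rw [dif_neg hsub12]⟩
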